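/- arXiv:1909.08605 — 5 statements merged into one kernel-verified Lean document; each statement's English description precedes it below -/
import Mathlib

section
/- For any fixed residual r ∈ ℝ, parameters c̄ > 0 and μ > 0, the function w ↦ w·r² + μc̄²(√w − 1)² on [0,1] attains its unique global minimum at w* = (μc̄²/(r² + μc̄²))². -/
/-- GNC-GM weight update: the function `w ↦ w r² + μ c̄² (√w − 1)²` on `[0,1]`
attains its unique global minimum at `w* = (μ c̄²/(r² + μ c̄²))²`. -/
theorem gnc_gm_weight_update (c μ r : ℝ) (hc : 0 < c) (hμ : 0 < μ) :
    let F : ℝ → ℝ := fun w => w * r ^ 2 + μ * c ^ 2 * (Real.sqrt w - 1) ^ 2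
    let wstar : ℝ := (μ * c ^ 2 / (r ^ 2 + μ * c ^ 2)) ^ 2
    wstar ∈ Set.Icc (0 : ℝ) 1 ∧
    (∀ w ∈ Set.Icc (0 : ℝ) 1, F wstar ≤ F w) ∧
    (∀ w ∈ Set.Icc (0 : ℝ) 1, w ≠ wstar → F wstar < F w) := by
  intro F wstar
  have hb : 0 < μ * c ^ 2 := by positivity
  have hab : 0 < r ^ 2 + μ * c ^ 2 := by nlinarith [sq_nonneg r]
  set s : ℝ := μ * c ^ 2 / (r ^ 2 + μ * c ^ 2) with hsdef
  have hs0 : 0 < s := div_pos hb hab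
  have hs1 : s ≤ 1 := by rw [hsdef, div_le_one hab]; nlinarith [sq_nonneg r]
  have hws : wstar = s ^ 2 := rfl
  have hsqrtw : Real.sqrt wstar = s := by rw [hws, Real.sqrt_sq hs0.le]
  have hseq : s * (r ^ 2 + μ * c ^ 2) = μ * c ^ 2 := by
    rw [hsdef]; field_simp
  have hmem : wstar ∈ Set.Icc (0:ℝ) 1 := ⟨by positivity, by rw [hws]; nlinarith⟩
  have key : ∀ w ∈ Set.Icc (0:ℝ) 1,
      F w - F wstar = (r ^ 2 + μ * c ^ 2) * (Real.sqrt w - s) ^ 2 := by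
    intro w hw
    have hsq : Real.sqrt w ^ 2 = w := Real.sq_sqrt hw.1
    simp only [F, hsqrtw, hws, Real.sqrt_sq hs0.le]
    nlinarith [hsq, hseq]
  refine ⟨hmem, ?_, ?_⟩
  · intro w hw
    have := key w hw
    nlinarith [sq_nonneg (Real.sqrt w - s), hab]
  · intro w hw hne
    have hk := key w hw
    have hsne : Real.sqrt w ≠ s := by
      intro h
      apply hne
      have : w = Real.sqrt w ^ 2 := (Real.sq_sqrt hw.1).symm
      rw [this, h, hws]
    have : 0 < (Real.sqrt w - s) ^ 2 := by
      have := sub_ne_zero.mpr hsne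
      positivity
    nlinarith
end

section
/- For fixed residual r ≥ 0, parameters c̄ > 0 and μ > 0, consider F(w) = w·r² + μ(1−w)c̄²/(μ + w) on [0,1]. Then: (i) if r² ≥ ((μ+1)/μ)c̄², the minimum of F is attained at w = 0; (ii) if r² ≤ (μ/(μ+1))c̄², the minimum is attained at w = 1; (iii) if (μ/(μ+1))c̄² ≤ r² ≤ ((μ+1)/μ)c̄² and r > 0, the minimum is attained at w* = (c̄/r)·√(μ(μ+1)) − μ, which lies in [0,1]. -/
/-- GNC-TLS weight update: minimizers of `F(w) = w r² + μ(1−w)c̄²/(μ+w)` on `[0,1]`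
in the three regimes of `r²`. -/
theorem gnc_tls_weight_update (c μ r : ℝ) (hc : 0 < c) (hμ : 0 < μ) (hr : 0 ≤ r) :
    let F : ℝ → ℝ := fun w => w * r ^ 2 + μ * (1 - w) * c ^ 2 / (μ + w)
    ((μ + 1) / μ * c ^ 2 ≤ r ^ 2 → ∀ w ∈ Set.Icc (0 : ℝ) 1, F 0 ≤ F w) ∧
    (r ^ 2 ≤ μ / (μ + 1) * c ^ 2 → ∀ w ∈ Set.Icc (0 : ℝ) 1, F 1 ≤ F w) ∧
    (μ / (μ + 1) * c ^ 2 ≤ r ^ 2 → r ^ 2 ≤ (μ + 1) / μ * c ^ 2 → 0 < r →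
      c / r * Real.sqrt (μ * (μ + 1)) - μ ∈ Set.Icc (0 : ℝ) 1 ∧
      ∀ w ∈ Set.Icc (0 : ℝ) 1, F (c / r * Real.sqrt (μ * (μ + 1)) - μ) ≤ F w) := by
  intro F
  have hμ1 : (0:ℝ) < μ + 1 := by linarith
  refine ⟨?_, ?_, ?_⟩
  · -- case r² large : minimum at 0
    intro h w hw
    obtain ⟨hw0, hw1⟩ := hw
    have hμw : 0 < μ + w := by linarith
    rw [div_mul_eq_mul_div, div_le_iff₀ hμ] at h
    have key : F w - F 0 = w * (r ^ 2 * (μ + w) - c ^ 2 * (μ + 1)) / (μ + w) := by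
      simp only [F]
      field_simp
      ring
    have h2 : 0 ≤ r ^ 2 * (μ + w) - c ^ 2 * (μ + 1) := by nlinarith [sq_nonneg r]
    have : 0 ≤ F w - F 0 := by
      rw [key]; exact div_nonneg (mul_nonneg hw0 h2) hμw.le
    linarith
  · -- case r² small : minimum at 1
    intro h w hw
    obtain ⟨hw0, hw1⟩ := hw
    have hμw : 0 < μ + w := by linarith
    rw [div_mul_eq_mul_div, le_div_iff₀ hμ1] at h
    have key : F w - F 1 = (1 - w) * (μ * c ^ 2 - r ^ 2 * (μ + w)) / (μ + w) := by
      simp only [F]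
      field_simp
      ring
    have h2 : 0 ≤ μ * c ^ 2 - r ^ 2 * (μ + w) := by nlinarith [sq_nonneg r]
    have : 0 ≤ F w - F 1 := by
      rw [key]; exact div_nonneg (mul_nonneg (by linarith) h2) hμw.le
    linarith
  · -- intermediate case
    intro h1 h2 hrpos
    set s := Real.sqrt (μ * (μ + 1)) with hs
    have hs2 : s ^ 2 = μ * (μ + 1) := Real.sq_sqrt (by positivity)
    have hs0 : 0 < s := Real.sqrt_pos.mpr (by positivity)
    rw [div_mul_eq_mul_div, div_le_iff₀ hμ1] at h1
    rw [div_mul_eq_mul_div, le_div_iff₀ hμ] at h2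
    have hlb : μ * r ≤ c * s := by
      nlinarith [mul_pos hc hs0, mul_pos hμ hrpos]
    have hub : c * s ≤ (μ + 1) * r := by
      nlinarith [mul_pos hc hs0, mul_pos hμ1 hrpos]
    have hwstar0 : 0 ≤ c / r * s - μ := by
      have : μ ≤ c / r * s := by
        rw [div_mul_eq_mul_div, le_div_iff₀ hrpos]
        linarith
      linarith
    have hwstar1 : c / r * s - μ ≤ 1 := by
      have : c / r * s ≤ μ + 1 := by
        rw [div_mul_eq_mul_div, div_le_iff₀ hrpos]
        linarith
      linarith
    refine ⟨⟨hwstar0, hwstar1⟩, ?_⟩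
    intro w hw
    obtain ⟨hw0, hw1⟩ := hw
    have hμw : 0 < μ + w := by linarith
    have hFws : F (c / r * s - μ) = 2 * r * c * s - μ * c ^ 2 - μ * r ^ 2 := by
      simp only [F]
      have hden : μ + (c / r * s - μ) = c * s / r := by ring
      rw [hden]
      have hcs : c * s ≠ 0 := (mul_pos hc hs0).ne'
      field_simp
      linear_combination (-(r * c)) * hs2
    have hFw : F w = r ^ 2 * (μ + w) + s ^ 2 * c ^ 2 / (μ + w) - μ * c ^ 2 - μ * r ^ 2 := by
      simp only [F]
      rw [hs2]
      field_simp
      ring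
    have key : F w - F (c / r * s - μ) = (r * (μ + w) - c * s) ^ 2 / (μ + w) := by
      rw [hFws, hFw]
      field_simp
      ring
    have : 0 ≤ F w - F (c / r * s - μ) := by
      rw [key]; exact div_nonneg (sq_nonneg _) hμw.le
    linarith
end

section
/- For every μ > 0, c̄ > 0 and r ∈ ℝ, the GNC-TLS surrogate ρ_μ(r) satisfies 0 ≤ ρ_μ(r) ≤ min(r², c̄²), and as μ → ∞, ρ_μ(r) converges to the truncated least squares cost ρ(r) = min(r², c̄²) pointwise for r² ≠ c̄². -/
/-- The GNC-TLS surrogate satisfies `0 ≤ ρ_μ(r) ≤ min(r², c̄²)` and converges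
pointwise (for `r² ≠ c̄²`) to the TLS cost `min(r², c̄²)` as `μ → ∞`. -/
theorem gnc_tls_surrogate_bounds_limit (c : ℝ) (hc : 0 < c) :
    let ρμ : ℝ → ℝ → ℝ := fun μ r =>
      if r ^ 2 ≤ μ / (μ + 1) * c ^ 2 then r ^ 2
      else if r ^ 2 ≤ (μ + 1) / μ * c ^ 2 then
        2 * c * |r| * Real.sqrt (μ * (μ + 1)) - μ * (c ^ 2 + r ^ 2)
      else c ^ 2
    (∀ μ r : ℝ, 0 < μ → 0 ≤ ρμ μ r ∧ ρμ μ r ≤ min (r ^ 2) (c ^ 2)) ∧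
    (∀ r : ℝ, r ^ 2 ≠ c ^ 2 →
      Filter.Tendsto (fun μ => ρμ μ r) Filter.atTop (nhds (min (r ^ 2) (c ^ 2)))) := by
  intro ρμ
  constructor
  · intro μ r hμ
    have hμ1 : (0:ℝ) < μ + 1 := by linarith
    have hr2 : |r| ^ 2 = r ^ 2 := sq_abs r
    have hra : 0 ≤ |r| := abs_nonneg r
    simp only [ρμ]
    split_ifs with h1 h2
    · refine ⟨by positivity, le_min le_rfl ?_⟩
      rw [div_mul_eq_mul_div, le_div_iff₀ hμ1] at h1
      nlinarith [sq_nonneg r, sq_nonneg c]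
    · push_neg at h1
      rw [div_mul_eq_mul_div, div_lt_iff₀ hμ1] at h1
      rw [div_mul_eq_mul_div, le_div_iff₀ hμ] at h2
      set s := Real.sqrt (μ * (μ + 1)) with hs
      have hs0 : 0 ≤ s := Real.sqrt_nonneg _
      have hs2 : s ^ 2 = μ * (μ + 1) := Real.sq_sqrt (by positivity)
      have hA : 0 ≤ 2 * c * |r| * s := by positivity
      have hB : 0 ≤ μ * (c ^ 2 + r ^ 2) := by positivity
      have e1 : (2 * c * |r| * s) ^ 2 = 4 * c ^ 2 * r ^ 2 * (μ * (μ + 1)) := by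
        rw [mul_pow, mul_pow, mul_pow, hs2, hr2]; ring
      have hAge : (μ + 1) * r ^ 2 - μ * c ^ 2 ≥ 0 := by nlinarith
      have hBge : (μ + 1) * c ^ 2 - μ * r ^ 2 ≥ 0 := by nlinarith
      have hsq : (μ * (c ^ 2 + r ^ 2)) ^ 2 ≤ (2 * c * |r| * s) ^ 2 := by
        rw [e1]
        nlinarith [mul_nonneg hAge hBge, mul_pos hμ hμ1, sq_nonneg (c * r),
          mul_nonneg (mul_nonneg hμ.le hμ.le) (sq_nonneg (c * r))]
      have hkey : μ * (c ^ 2 + r ^ 2) ≤ 2 * c * |r| * s := by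
        nlinarith [hsq, hA, hB]
      refine ⟨by linarith, le_min ?_ ?_⟩
      · nlinarith [sq_nonneg (s * |r| - μ * c), hs2, hr2, hμ]
      · nlinarith [sq_nonneg (s * c - μ * |r|), hs2, hr2, hμ]
    · push_neg at h2
      rw [div_mul_eq_mul_div, div_lt_iff₀ hμ] at h2
      refine ⟨by positivity, le_min (by nlinarith) le_rfl⟩
  · intro r hr
    rcases lt_or_gt_of_ne hr with h | h
    · have hmin : min (r ^ 2) (c ^ 2) = r ^ 2 := min_eq_left h.le
      rw [hmin]
      apply Filter.Tendsto.congr' _ tendsto_const_nhds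
      filter_upwards [Filter.eventually_ge_atTop (max 1 (r ^ 2 / (c ^ 2 - r ^ 2)))] with μ hμ
      have hμ1 : (1:ℝ) ≤ μ := le_trans (le_max_left _ _) hμ
      have hμ0 : (0:ℝ) < μ := by linarith
      have hd : 0 < c ^ 2 - r ^ 2 := by linarith
      have h2 : r ^ 2 / (c ^ 2 - r ^ 2) ≤ μ := le_trans (le_max_right _ _) hμ
      rw [div_le_iff₀ hd] at h2
      have hcond : r ^ 2 ≤ μ / (μ + 1) * c ^ 2 := by
        rw [div_mul_eq_mul_div, le_div_iff₀ (by linarith)]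
        nlinarith
      simp only [ρμ, if_pos hcond]
    · have hmin : min (r ^ 2) (c ^ 2) = c ^ 2 := min_eq_right h.le
      rw [hmin]
      apply Filter.Tendsto.congr' _ tendsto_const_nhds
      filter_upwards [Filter.eventually_ge_atTop (max 1 (c ^ 2 / (r ^ 2 - c ^ 2) + 1))] with μ hμ
      have hμ1 : (1:ℝ) ≤ μ := le_trans (le_max_left _ _) hμ
      have hμ0 : (0:ℝ) < μ := by linarith
      have hd : 0 < r ^ 2 - c ^ 2 := by linarith
      have h2 : c ^ 2 / (r ^ 2 - c ^ 2) + 1 ≤ μ := le_trans (le_max_right _ _) hμ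
      have h2' : c ^ 2 / (r ^ 2 - c ^ 2) < μ := by linarith
      rw [div_lt_iff₀ hd] at h2'
      have hc1 : ¬ r ^ 2 ≤ μ / (μ + 1) * c ^ 2 := by
        rw [div_mul_eq_mul_div, not_le, div_lt_iff₀ (by linarith)]
        nlinarith [sq_nonneg c]
      have hc2 : ¬ r ^ 2 ≤ (μ + 1) / μ * c ^ 2 := by
        rw [div_mul_eq_mul_div, not_le, div_lt_iff₀ hμ0]
        nlinarith
      simp only [ρμ, if_neg hc1, if_neg hc2]
end

section
/- The minimum over w ∈ [0,1] of the GNC-TLS outlier process objective equals the surrogate cost: for all r ≥ 0, min_{w∈[0,1]} [w·r² + μ(1−w)c̄²/(μ+w)] = ρ_μ(r), where ρ_μ is the GNC-TLS surrogate. -/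
/-- Black-Rangarajan duality for the TLS surrogate: the minimum over `w ∈ [0,1]`
of the outlier-process objective equals the GNC-TLS surrogate cost. -/
theorem gnc_tls_black_rangarajan (c μ : ℝ) (hc : 0 < c) (hμ : 0 < μ) :
    ∀ r : ℝ, 0 ≤ r →
      IsLeast ((fun w : ℝ => w * r ^ 2 + μ * (1 - w) * c ^ 2 / (μ + w)) ''
          Set.Icc (0 : ℝ) 1)
        (if r ^ 2 ≤ μ / (μ + 1) * c ^ 2 then r ^ 2
         else if r ^ 2 ≤ (μ + 1) / μ * c ^ 2 then
           2 * c * r * Real.sqrt (μ * (μ + 1)) - μ * (c ^ 2 + r ^ 2)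
         else c ^ 2) := by
  intro r hr
  have hμ1 : (0:ℝ) < μ + 1 := by linarith
  set s := Real.sqrt (μ * (μ + 1)) with hs_def
  have hs0 : 0 ≤ s := Real.sqrt_nonneg _
  have hs2 : s ^ 2 = μ * (μ + 1) := Real.sq_sqrt (by positivity)
  split_ifs with h1 h2
  · -- r² ≤ μ/(μ+1) c², minimum at w = 1
    constructor
    · refine ⟨1, Set.mem_Icc.mpr ⟨zero_le_one, le_refl 1⟩, ?_⟩
      simp
    · rintro y ⟨w, hw, rfl⟩
      obtain ⟨hw0, hw1⟩ := Set.mem_Icc.mp hw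
      have hwμ : 0 < μ + w := by linarith
      rw [← sub_nonneg]
      have key : w * r ^ 2 + μ * (1 - w) * c ^ 2 / (μ + w) - r ^ 2
          = ((1 - w) * (μ * c ^ 2 - (μ + w) * r ^ 2)) / (μ + w) := by
        field_simp; ring
      rw [key]
      apply div_nonneg _ hwμ.le
      have h1' : (μ + 1) * r ^ 2 ≤ μ * c ^ 2 := by
        rw [div_mul_eq_mul_div, le_div_iff₀ hμ1] at h1
        linarith
      have hfac : 0 ≤ μ * c ^ 2 - (μ + w) * r ^ 2 := by
        nlinarith [mul_nonneg (by linarith : (0:ℝ) ≤ 1 - w) (sq_nonneg r)]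
      exact mul_nonneg (by linarith) hfac
  · -- middle case
    have hμc : μ * c ^ 2 < (μ + 1) * r ^ 2 := by
      rw [not_le, div_mul_eq_mul_div, div_lt_iff₀ hμ1] at h1
      linarith
    have h2' : μ * r ^ 2 ≤ (μ + 1) * c ^ 2 := by
      rw [div_mul_eq_mul_div, le_div_iff₀ hμ] at h2
      linarith
    have hr0 : 0 < r := by
      rcases hr.lt_or_eq with h | h
      · exact h
      · exfalso; rw [← h] at hμc
        nlinarith [mul_pos hμ (pow_pos hc 2)]
    have hspos : 0 < s := by
      rw [hs_def]; exact Real.sqrt_pos.mpr (by positivity)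
    have hcs : 0 < c * s := by positivity
    constructor
    · refine ⟨c * s / r - μ, Set.mem_Icc.mpr ⟨?_, ?_⟩, ?_⟩
      · rw [sub_nonneg, le_div_iff₀ hr0]
        nlinarith [sq_nonneg (c * s - μ * r), mul_pos hμ hr0, mul_pos hcs (mul_pos hμ hr0)]
      · rw [sub_le_iff_le_add, div_le_iff₀ hr0]
        nlinarith [sq_nonneg (c * s - (μ + 1) * r), mul_pos hμ1 hr0,
          mul_pos hcs (mul_pos hμ1 hr0)]
      · simp only
        have hd : μ + (c * s / r - μ) = c * s / r := by ring
        rw [hd]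
        field_simp
        ring_nf
        linear_combination (-(r*c)) * hs2
    · rintro y ⟨w, hw, rfl⟩
      obtain ⟨hw0, hw1⟩ := Set.mem_Icc.mp hw
      have hwμ : 0 < μ + w := by linarith
      rw [← sub_nonneg]
      have key : w * r ^ 2 + μ * (1 - w) * c ^ 2 / (μ + w)
          - (2 * c * r * s - μ * (c ^ 2 + r ^ 2))
          = ((μ + w) * r - c * s) ^ 2 / (μ + w) := by
        field_simp
        ring_nf
        linear_combination (-(c^2)) * hs2
      rw [key]
      positivity
  · -- r² large, minimum at w = 0
    have h2' : (μ + 1) * c ^ 2 < μ * r ^ 2 := by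
      rw [not_le, div_mul_eq_mul_div, div_lt_iff₀ hμ] at h2
      linarith
    constructor
    · refine ⟨0, Set.mem_Icc.mpr ⟨le_refl 0, zero_le_one⟩, ?_⟩
      simp only
      field_simp
      ring
    · rintro y ⟨w, hw, rfl⟩
      obtain ⟨hw0, hw1⟩ := Set.mem_Icc.mp hw
      have hwμ : 0 < μ + w := by linarith
      rw [← sub_nonneg]
      have key : w * r ^ 2 + μ * (1 - w) * c ^ 2 / (μ + w) - c ^ 2
          = (w * ((μ + w) * r ^ 2 - (μ + 1) * c ^ 2)) / (μ + w) := by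
        field_simp; ring
      rw [key]
      apply div_nonneg _ hwμ.le
      have hfac : 0 ≤ (μ + w) * r ^ 2 - (μ + 1) * c ^ 2 := by
        nlinarith [mul_nonneg hw0 (sq_nonneg r)]
      exact mul_nonneg hw0 hfac
end

section
/- The minimum over w ∈ [0,1] of the GNC-GM outlier process objective equals the GM surrogate cost: for all r ∈ ℝ, min_{w∈[0,1]} [w·r² + μc̄²(√w − 1)²] = μc̄²r²/(μc̄² + r²). -/
/-- Black-Rangarajan duality for the Geman-McClure surrogate: the minimum over
`w ∈ [0,1]` of the outlier-process objective equals `μ c̄² r²/(μ c̄² + r²)`. -/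
theorem gnc_gm_black_rangarajan (c μ : ℝ) (hc : 0 < c) (hμ : 0 < μ) :
    ∀ r : ℝ,
      IsLeast ((fun w : ℝ => w * r ^ 2 + μ * c ^ 2 * (Real.sqrt w - 1) ^ 2) ''
          Set.Icc (0 : ℝ) 1)
        (μ * c ^ 2 * r ^ 2 / (μ * c ^ 2 + r ^ 2)) := by
  intro r
  set a := μ * c ^ 2 with ha_def
  have ha : 0 < a := by positivity
  have hs : 0 ≤ r ^ 2 := sq_nonneg r
  have hden : 0 < a + r ^ 2 := by linarith
  constructor
  · refine ⟨(a / (a + r ^ 2)) ^ 2, ⟨sq_nonneg _, ?_⟩, ?_⟩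
    · have h1 : a / (a + r ^ 2) ≤ 1 := by
        rw [div_le_one hden]; linarith
      have h0 : 0 ≤ a / (a + r ^ 2) := by positivity
      nlinarith
    · have hsq : Real.sqrt ((a / (a + r ^ 2)) ^ 2) = a / (a + r ^ 2) := by
        rw [Real.sqrt_sq (by positivity)]
      simp only [hsq]
      field_simp
      ring
  · rintro y ⟨w, ⟨hw0, hw1⟩, rfl⟩
    set t := Real.sqrt w with ht_def
    have htw : t ^ 2 = w := Real.sq_sqrt hw0
    simp only
    have hst : Real.sqrt w = t := rfl
    rw [div_le_iff₀ hden, hst, ← htw]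
    nlinarith [sq_nonneg ((a + r ^ 2) * t - a)]
end
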